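/- Let G be a normed gyrogroup. If G contains two nonidentity elements x and y with ‖x‖ ≠ ‖y‖, then the geometry (G, Γ_m) is not n-transitive for all n ≥ 2. -/

import Mathlib

/-- A gyrogroup: a set with a binary operation `op`, a left identity `e`, left inverses
`inv`, and gyroautomorphisms `gyr a b` (bijective and operation-preserving) satisfying the
left gyroassociative law and the left loop property. -/
class Gyrogroup (G : Type*) where
  /-- the gyrogroup operation `⊕` -/
  op : G → G → G
  /-- the identity element -/
  e : G
  /-- the inverse `⊖a` -/
  inv : G → G
  /-- (G1) `e ⊕ a = a` -/
  op_e : ∀ a : G, op e a = a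
  /-- (G2) `⊖a ⊕ a = e` -/
  op_inv : ∀ a : G, op (inv a) a = e
  /-- the gyroautomorphism `gyr[a, b]` -/
  gyr : G → G → G → G
  /-- (G3) `gyr[a, b]` is bijective -/
  gyr_bijective : ∀ a b : G, Function.Bijective (gyr a b)
  /-- (G3) `gyr[a, b]` preserves the operation -/
  gyr_op : ∀ a b x y : G, gyr a b (op x y) = op (gyr a b x) (gyr a b y)
  /-- (G3) the left gyroassociative law -/
  gyrassoc : ∀ a b c : G, op a (op b c) = op (op a b) (gyr a b c)
  /-- (G4) the left loop property -/
  loop : ∀ a b : G, gyr (op a b) b = gyr a b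

namespace Gyrogroup

variable {G : Type*} [Gyrogroup G]

theorem key (x z : G) : op (inv x) (op x z) = gyr (inv x) x z := by
  rw [gyrassoc, op_inv, op_e]

theorem L_injective (x : G) : Function.Injective (op x) := by
  intro z₁ z₂ h
  have h1 : gyr (inv x) x z₁ = gyr (inv x) x z₂ := by
    rw [← key, ← key, h]
  exact (gyr_bijective (inv x) x).1 h1

theorem L_surjective (x : G) : Function.Surjective (op x) := by
  intro w
  obtain ⟨z, hz⟩ := (gyr_bijective (inv x) x).2 (op (inv x) w)
  exact ⟨z, L_injective (inv x) (by rw [key, hz])⟩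

theorem L_bijective (x : G) : Function.Bijective (op x) :=
  ⟨L_injective x, L_surjective x⟩

/-- The left gyrotranslation `L_a : x ↦ a ⊕ x` as a permutation of `G`. -/
noncomputable def Lperm (a : G) : Equiv.Perm G := Equiv.ofBijective (op a) (L_bijective a)

/-- The gyroautomorphism `gyr[a, b]` as a permutation of `G`. -/
noncomputable def gyrPerm (a b : G) : Equiv.Perm G := Equiv.ofBijective (gyr a b) (gyr_bijective a b)

/-- `GYR(G)`: the subgroup of `Sym(G)` generated by all gyroautomorphisms. -/
def GYR (G : Type*) [Gyrogroup G] : Subgroup (Equiv.Perm G) :=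
  Subgroup.closure {π : Equiv.Perm G | ∃ a b : G, π = gyrPerm a b}

/-- `Γₘ = {L_a ∘ γ : a ∈ G, γ ∈ GYR(G)}`, a subgroup of `Sym(G)`. -/
def Γm (G : Type*) [Gyrogroup G] : Set (Equiv.Perm G) :=
  {T : Equiv.Perm G | ∃ a : G, ∃ γ ∈ GYR G, T = Lperm a * γ}

end Gyrogroup

/-- The geometry `(S, 𝒯)` is `n`-transitive: `S` has at least `n` distinct elements, and any
`n` pairwise distinct points can be mapped to any `n` pairwise distinct points by a single
transformation of `𝒯`. -/
def IsNTransitive {S : Type*} (𝒯 : Set (Equiv.Perm S)) (n : ℕ) : Prop :=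
  (∃ x : Fin n → S, Function.Injective x) ∧
    ∀ x y : Fin n → S, Function.Injective x → Function.Injective y →
      ∃ t ∈ 𝒯, ∀ i, t (x i) = y i

/-- A normed gyrogroup: a gyrogroup equipped with a gyronorm `‖·‖ : G → ℝ` that is
nonnegative (vanishing exactly at the identity), invariant under taking inverses,
subadditive, and invariant under gyrations. -/
class NormedGyrogroup (G : Type*) extends Gyrogroup G where
  /-- the gyronorm -/
  gnorm : G → ℝ
  gnorm_nonneg : ∀ x : G, 0 ≤ gnorm x
  gnorm_eq_zero_iff : ∀ x : G, gnorm x = 0 ↔ x = e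
  gnorm_inv : ∀ x : G, gnorm (inv x) = gnorm x
  gnorm_op_le : ∀ x y : G, gnorm (op x y) ≤ gnorm x + gnorm y
  gnorm_gyr : ∀ a b x : G, gnorm (gyr a b x) = gnorm x

/-- The gyronorm metric `d_η(x, y) = ‖⊖x ⊕ y‖` of a normed gyrogroup. -/
def dEta {G : Type*} [NormedGyrogroup G] (x y : G) : ℝ :=
  NormedGyrogroup.gnorm (Gyrogroup.op (Gyrogroup.inv x) y)

section Aux

namespace Gyrogroup

variable {G : Type*} [Gyrogroup G]

theorem gyr_e_left (b c : G) : gyr e b c = c := by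
  apply L_injective b
  have h : op e (op b c) = op b (gyr e b c) := by rw [gyrassoc e b c, op_e]
  rw [← h, op_e]

theorem gyr_inv_self (b c : G) : gyr (inv b) b c = c := by
  have h := loop (inv b) b
  rw [op_inv] at h
  rw [← h, gyr_e_left]

theorem left_cancel (x z : G) : op (inv x) (op x z) = z := by
  rw [key, gyr_inv_self]

theorem op_e_right (a : G) : op a e = a := by
  apply L_injective (inv a)
  rw [left_cancel, op_inv]

theorem inv_inv (a : G) : inv (inv a) = a := by
  have h := left_cancel (inv a) a
  rwa [op_inv, op_e_right] at h

theorem left_cancel' (b c : G) : op b (op (inv b) c) = c := by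
  nth_rewrite 1 [← inv_inv b]; exact left_cancel (inv b) c

theorem op_inv_right (a : G) : op a (inv a) = e := by
  nth_rewrite 1 [← inv_inv a]; exact op_inv (inv a)

theorem eq_inv_of_op {x a : G} (h : op x a = e) : x = inv a := by
  have hgyr : gyr x a = gyr e a := by rw [← loop x a, h]
  have h2 : op x (op a (inv a)) = op (op x a) (gyr x a (inv a)) := gyrassoc x a (inv a)
  rw [op_inv_right, op_e_right, h, op_e, hgyr, gyr_e_left] at h2
  exact h2

theorem inv_e : (inv e : G) = e := (eq_inv_of_op (op_e e)).symm

theorem gyr_e (a b : G) : gyr a b e = e := by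
  have h : gyr a b e = op (gyr a b e) (gyr a b e) := by rw [← gyr_op, op_e]
  have h2 := left_cancel (gyr a b e) (gyr a b e)
  rw [← h, op_inv] at h2
  exact h2.symm

theorem gyr_inv (a b x : G) : gyr a b (inv x) = inv (gyr a b x) := by
  apply eq_inv_of_op
  rw [← gyr_op, op_inv, gyr_e]

theorem trans_identity (a b c : G) :
    op (inv (op a b)) (op a c) = gyr a b (op (inv b) c) := by
  have h : op a c = op (op a b) (gyr a b (op (inv b) c)) := by
    rw [← gyrassoc, left_cancel']
  rw [h, left_cancel]

end Gyrogroup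

open Gyrogroup NormedGyrogroup

variable {G : Type*} [NormedGyrogroup G]

theorem dEta_e (z : G) : dEta e z = gnorm z := by
  unfold dEta; rw [inv_e, op_e]

theorem gyr_mem_prop (γ : Equiv.Perm G) (hγ : γ ∈ GYR G) :
    (∀ x y : G, γ (op x y) = op (γ x) (γ y)) ∧ (∀ x : G, gnorm (γ x) = gnorm x) := by
  induction hγ using Subgroup.closure_induction with
  | mem π hπ =>
      obtain ⟨a, b, rfl⟩ := hπ
      exact ⟨fun x y => gyr_op a b x y, fun x => gnorm_gyr a b x⟩
  | one => exact ⟨fun x y => rfl, fun x => rfl⟩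
  | mul π σ hπ hσ ihπ ihσ =>
      refine ⟨fun x y => ?_, fun x => ?_⟩
      · simp only [Equiv.Perm.mul_apply, ihσ.1, ihπ.1]
      · simp only [Equiv.Perm.mul_apply, ihσ.2, ihπ.2]
  | inv π hπ ih =>
      refine ⟨fun x y => ?_, fun x => ?_⟩
      · apply π.injective
        rw [ih.1, Equiv.Perm.inv_def, Equiv.apply_symm_apply, Equiv.apply_symm_apply,
          Equiv.apply_symm_apply]
      · rw [← ih.2 (π⁻¹ x), Equiv.Perm.inv_def, Equiv.apply_symm_apply]

theorem gamma_isometry (T : Equiv.Perm G) (hT : T ∈ Γm G) (x y : G) :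
    dEta (T x) (T y) = dEta x y := by
  obtain ⟨a, γ, hγ, rfl⟩ := hT
  obtain ⟨hop, hnorm⟩ := gyr_mem_prop γ hγ
  have hγe : γ e = e := by
    have h := hop e e
    rw [op_e] at h
    have h2 := left_cancel (γ e) (γ e)
    rw [← h, op_inv] at h2
    exact h2.symm
  have hγinv : ∀ z : G, γ (inv z) = inv (γ z) := by
    intro z
    apply eq_inv_of_op
    rw [← hop, op_inv, hγe]
  simp only [Equiv.Perm.mul_apply]
  show dEta (Lperm a (γ x)) (Lperm a (γ y)) = dEta x y
  have hLa : ∀ u : G, Lperm a u = op a u := fun u => rfl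
  rw [hLa, hLa]
  unfold dEta
  rw [trans_identity, gnorm_gyr, ← hγinv, ← hop, hnorm]


theorem exists_tuple {S : Type*} {n : ℕ} (hn : 2 ≤ n) (u : Fin n → S)
    (hu : Function.Injective u) (a b : S) (hab : a ≠ b) :
    ∃ v : Fin n → S, Function.Injective v ∧ v ⟨0, by omega⟩ = a ∧ v ⟨1, by omega⟩ = b := by
  classical
  set s : Finset S := Finset.image u Finset.univ with hs
  have hscard : s.card = n := by
    rw [hs, Finset.card_image_of_injective _ hu, Finset.card_univ, Fintype.card_fin]
  have htcard : n - 2 ≤ (s \ {a, b}).card := by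
    have h1 := Finset.le_card_sdiff ({a, b} : Finset S) s
    have h2 : ({a, b} : Finset S).card ≤ 2 := Finset.card_insert_le _ _ |>.trans (by simp)
    omega
  obtain ⟨t', ht'sub, ht'card⟩ := Finset.exists_subset_card_eq htcard
  have hta : ∀ z ∈ t', z ≠ a := by
    intro z hz
    have := ht'sub hz
    rw [Finset.mem_sdiff] at this
    simp only [Finset.mem_insert, Finset.mem_singleton] at this
    tauto
  have htb : ∀ z ∈ t', z ≠ b := by
    intro z hz
    have := ht'sub hz
    rw [Finset.mem_sdiff] at this
    simp only [Finset.mem_insert, Finset.mem_singleton] at this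
    tauto
  set g : Fin (n - 2) → S := fun i => ((Finset.equivFinOfCardEq ht'card).symm i : S) with hg
  have hginj : Function.Injective g := by
    intro i j hij
    have := Subtype.ext hij
    exact (Finset.equivFinOfCardEq ht'card).symm.injective this
  have hgmem : ∀ i, g i ∈ t' := fun i => ((Finset.equivFinOfCardEq ht'card).symm i).2
  refine ⟨fun i => if h0 : i.val = 0 then a else if h1 : i.val = 1 then b
    else g ⟨i.val - 2, by have := i.isLt; omega⟩, ?_, by simp, by simp⟩
  intro i j hij
  simp only at hij
  split_ifs at hij with h1 h2 h3 h4 h5 h6 h7 h8 h9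
  · exact Fin.ext (by omega)
  · exact absurd hij hab
  · exact absurd hij.symm (hta _ (hgmem _))
  · exact absurd hij.symm hab
  · exact Fin.ext (by omega)
  · exact absurd hij.symm (htb _ (hgmem _))
  · exact absurd hij (hta _ (hgmem _))
  · exact absurd hij (htb _ (hgmem _))
  · have := hginj hij
    have h2 : i.val - 2 = j.val - 2 := congrArg Fin.val this
    exact Fin.ext (by omega)

end Aux

open Gyrogroup NormedGyrogroup in
/-- If a normed gyrogroup `G` contains two nonidentity elements of different gyronorms,
then the geometry `(G, Γₘ)` is not `n`-transitive for any `n ≥ 2`. -/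
theorem stmt17 {G : Type*} [NormedGyrogroup G]
    (h : ∃ x y : G, x ≠ e ∧ y ≠ e ∧ gnorm x ≠ gnorm y) :
    ∀ n : ℕ, 2 ≤ n → ¬ IsNTransitive (Γm G) n := by
  obtain ⟨x, y, hx, hy, hxy⟩ := h
  intro n hn hT
  obtain ⟨⟨u, hu⟩, htrans⟩ := hT
  obtain ⟨v, hv, hv0, hv1⟩ := exists_tuple hn u hu e x (Ne.symm hx)
  obtain ⟨w, hw, hw0, hw1⟩ := exists_tuple hn u hu e y (Ne.symm hy)
  obtain ⟨t, htm, ht⟩ := htrans v w hv hw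
  have h0 := ht ⟨0, by omega⟩
  have h1 := ht ⟨1, by omega⟩
  rw [hv0, hw0] at h0
  rw [hv1, hw1] at h1
  have hiso := gamma_isometry t htm e x
  rw [h0, h1, dEta_e, dEta_e] at hiso
  exact hxy hiso.symm
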